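/- Let $a,b>0$, let $\hat T\in(0,\infty]$ and set $\hat\tau=\min\{1,\hat T/2\}$. Suppose $y\colon[0,\hat T)\to[0,\infty)$ is continuous on $[0,\hat T)$ and differentiable on $(0,\hat T)$, $f\colon(0,\hat T)\to[0,\infty)$ is locally integrable, $y'(t)+a\,y(t)\le f(t)$ for all $t\in(0,\hat T)$, and $\int_t^{t+\hat\tau} f(s)\,ds\le b$ for all $t\in(0,\hat T-\hat\tau)$. Then $y(t)\le y(0)+2b+b/a$ for all $t\in(0,\hat T)$. -/

import Mathlib

open MeasureTheory intervalIntegral Set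
open scoped ENNReal

set_option maxHeartbeats 1000000

/-- ODE comparison lemma (Lemma 2.2): `T̂ ∈ (0,∞]` may be infinite, `τ̂ = min{1, T̂/2}`. -/
theorem stmt_0 (a b : ℝ) (ha : 0 < a) (hb : 0 < b)
    (T : ℝ≥0∞) (hT : 0 < T)
    (τ : ℝ) (hτ : τ = (min 1 (T / 2)).toReal)
    (y y' f : ℝ → ℝ)
    (hy_cont : ContinuousOn y {t : ℝ | 0 ≤ t ∧ ENNReal.ofReal t < T})
    (hy_nonneg : ∀ t : ℝ, 0 ≤ t → ENNReal.ofReal t < T → 0 ≤ y t)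
    (hy_deriv : ∀ t : ℝ, 0 < t → ENNReal.ofReal t < T → HasDerivAt y (y' t) t)
    (hf_nonneg : ∀ t : ℝ, 0 < t → ENNReal.ofReal t < T → 0 ≤ f t)
    (hf_int : ∀ t₁ t₂ : ℝ, 0 ≤ t₁ → t₁ ≤ t₂ → ENNReal.ofReal t₂ < T →
      IntervalIntegrable f volume t₁ t₂)
    (hode : ∀ t : ℝ, 0 < t → ENNReal.ofReal t < T → y' t + a * y t ≤ f t)
    (hbound : ∀ t : ℝ, 0 < t → ENNReal.ofReal (t + τ) < T →
      ∫ s in t..(t + τ), f s ≤ b) :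
    ∀ t : ℝ, 0 < t → ENNReal.ofReal t < T → y t ≤ y 0 + 2 * b + b / a := by
  have hmono : ∀ {x t : ℝ}, x ≤ t → ENNReal.ofReal t < T → ENNReal.ofReal x < T := by
    intro x t hxt h
    exact lt_of_le_of_lt (ENNReal.ofReal_le_ofReal hxt) h
  -- basic facts about τ
  have hτle1 : τ ≤ 1 := by
    rw [hτ]
    calc (min 1 (T / 2)).toReal ≤ (1 : ℝ≥0∞).toReal :=
      ENNReal.toReal_mono ENNReal.one_ne_top (min_le_left _ _)
    _ = 1 := by simp
  have hτpos : 0 < τ := by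
    rw [hτ]
    refine ENNReal.toReal_pos ?_ ?_
    · have : 0 < min 1 (T / 2) := lt_min one_pos (ENNReal.div_pos hT.ne' ENNReal.ofNat_ne_top)
      exact this.ne'
    · exact ne_top_of_le_ne_top ENNReal.one_ne_top (min_le_left _ _)
  -- if T/2 < 1, then T is finite and 2τ = T.toReal
  have hτsmall : T / 2 < 1 → T ≠ ⊤ ∧ 2 * τ = T.toReal := by
    intro h
    have hTne : T ≠ ⊤ := by
      intro h'; rw [h'] at h; simp [ENNReal.top_div_of_ne_top] at h
    constructor
    · exact hTne
    · rw [hτ, min_eq_right h.le, ENNReal.toReal_div]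
      norm_num
      ring
  have hcase_small : ∀ t : ℝ, t ≤ 2 → ENNReal.ofReal t < T → t ≤ 2 * τ := by
    intro t ht2 htT
    rcases le_or_gt 1 (T / 2) with h | h
    · have : τ = 1 := by rw [hτ, min_eq_left h]; simp
      linarith
    · obtain ⟨hTne, h2τ⟩ := hτsmall h
      rcases le_or_gt t 0 with h0 | h0
      · linarith
      · have := (ENNReal.ofReal_lt_iff_lt_toReal h0.le hTne).mp htT
        linarith
  have hτeq1 : ∀ t : ℝ, 0 < t → ENNReal.ofReal t < T → 2 * τ < t → τ = 1 := by
    intro t h0 htT h2τ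
    rcases le_or_gt 1 (T / 2) with h | h
    · rw [hτ, min_eq_left h]; simp
    · obtain ⟨hTne, h2τ'⟩ := hτsmall h
      have := (ENNReal.ofReal_lt_iff_lt_toReal h0.le hTne).mp htT
      linarith
  -- step lemma: integrating factor estimate
  have L1 : ∀ s t : ℝ, 0 < s → s ≤ t → ENNReal.ofReal t < T →
      Real.exp (a * t) * y t ≤ Real.exp (a * s) * y s +
        Real.exp (a * t) * ∫ σ in s..t, f σ := by
    intro s t hs hst htT
    have hIcc : Icc s t ⊆ {u : ℝ | 0 ≤ u ∧ ENNReal.ofReal u < T} := by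
      intro u hu
      exact ⟨hs.le.trans hu.1, hmono hu.2 htT⟩
    have hcont : ContinuousOn (fun σ => Real.exp (a * σ) * y σ) (Icc s t) :=
      ((Real.continuous_exp.comp (continuous_const.mul continuous_id)).continuousOn).mul
        (hy_cont.mono hIcc)
    have hderiv : ∀ x ∈ Ico s t, HasDerivWithinAt (fun σ => Real.exp (a * σ) * y σ)
        (Real.exp (a * x) * a * y x + Real.exp (a * x) * y' x) (Ioi x) x := by
      intro x hx
      have hx0 : 0 < x := lt_of_lt_of_le hs hx.1
      have hxT : ENNReal.ofReal x < T := hmono hx.2.le htT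
      have h1 : HasDerivAt (fun σ => Real.exp (a * σ)) (Real.exp (a * x) * a) x := by
        simpa [Function.comp_def] using (Real.hasDerivAt_exp (a * x)).comp x ((hasDerivAt_id x).const_mul a)
      exact ((h1.mul (hy_deriv x hx0 hxT)).congr_deriv (by ring)).hasDerivWithinAt
    have hφint : IntegrableOn (fun σ => Real.exp (a * t) * f σ) (Icc s t) volume := by
      have := (hf_int s t hs.le hst htT).const_mul (Real.exp (a * t))
      rwa [intervalIntegrable_iff_integrableOn_Icc_of_le hst] at this
    have hle : ∀ x ∈ Ico s t, Real.exp (a * x) * a * y x + Real.exp (a * x) * y' x ≤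
        Real.exp (a * t) * f x := by
      intro x hx
      have hx0 : 0 < x := lt_of_lt_of_le hs hx.1
      have hxT : ENNReal.ofReal x < T := hmono hx.2.le htT
      have hfx : 0 ≤ f x := hf_nonneg x hx0 hxT
      have hode' : y' x + a * y x ≤ f x := hode x hx0 hxT
      have hexp : Real.exp (a * x) ≤ Real.exp (a * t) :=
        Real.exp_le_exp.mpr (by nlinarith [hx.2.le])
      have hexp0 : 0 < Real.exp (a * x) := Real.exp_pos _
      nlinarith [mul_le_mul_of_nonneg_left hode' hexp0.le]
    have key := sub_le_integral_of_hasDeriv_right_of_le_Ico hst hcont hderiv hφint hle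
    rw [intervalIntegral.integral_const_mul] at key
    linarith
  have hy0 : 0 ≤ y 0 := hy_nonneg 0 le_rfl (by simpa using hT)
  -- bound on ∫_ε^t f for small ε when t ≤ 2τ
  have hint2b : ∀ ε t : ℝ, 0 < ε → ε < τ → ε < t → t ≤ 2 * τ → ENNReal.ofReal t < T →
      ∫ σ in ε..t, f σ ≤ 2 * b := by
    intro ε t hε hετ hεt ht2τ htT
    have hετT : ENNReal.ofReal (ε + τ) < T := by
      rcases eq_or_ne T ⊤ with h | h
      · rw [h]; exact ENNReal.ofReal_lt_top
      · rw [ENNReal.ofReal_lt_iff_lt_toReal (by linarith) h]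
        have hτhalf : τ ≤ T.toReal / 2 := by
          rw [hτ]
          calc (min 1 (T / 2)).toReal ≤ (T / 2).toReal :=
            ENNReal.toReal_mono (by simp [ENNReal.div_eq_top, h]) (min_le_right _ _)
          _ = T.toReal / 2 := by rw [ENNReal.toReal_div]; norm_num
        linarith
    have hfge : ∀ {c d : ℝ}, 0 ≤ c → ENNReal.ofReal d < T →
        (0 : ℝ → ℝ) ≤ᵐ[volume.restrict (Ioc c d)] f := by
      intro c d hc hdT
      refine (ae_restrict_iff' measurableSet_Ioc).mpr (Filter.Eventually.of_forall ?_)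
      intro x hx
      exact hf_nonneg x (lt_of_le_of_lt hc hx.1) (hmono hx.2 hdT)
    have hb1 : ∫ σ in ε..(ε + τ), f σ ≤ b := hbound ε hε hετT
    rcases le_or_gt t (ε + τ) with hcase | hcase
    · have hmono1 : ∫ σ in ε..t, f σ ≤ ∫ σ in ε..(ε + τ), f σ :=
        intervalIntegral.integral_mono_interval le_rfl hεt.le hcase
          (hfge hε.le hετT) (hf_int ε (ε + τ) hε.le (by linarith) hετT)
      linarith
    · have h1 : ∫ σ in ε..t, f σ = (∫ σ in ε..(ε + τ), f σ) + ∫ σ in (ε + τ)..t, f σ :=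
        (intervalIntegral.integral_add_adjacent_intervals
          (hf_int ε (ε + τ) hε.le (by linarith) hετT)
          (hf_int (ε + τ) t (by linarith) hcase.le htT)).symm
      have htτ0 : 0 < t - τ := by linarith
      have hmono2 : ∫ σ in (ε + τ)..t, f σ ≤ ∫ σ in (t - τ)..t, f σ :=
        intervalIntegral.integral_mono_interval (by linarith) hcase.le le_rfl
          (hfge htτ0.le htT) (hf_int (t - τ) t htτ0.le (by linarith) htT)
      have hb2 : ∫ σ in (t - τ)..t, f σ ≤ b := by
        have := hbound (t - τ) htτ0 (by rw [sub_add_cancel]; exact htT)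
        rwa [sub_add_cancel] at this
      linarith
  -- case 1: t ≤ 2τ
  have hcase1 : ∀ t : ℝ, 0 < t → t ≤ 2 * τ → ENNReal.ofReal t < T → y t ≤ y 0 + 2 * b := by
    intro t ht ht2τ htT
    set c := min t τ with hc
    have hc0 : 0 < c := lt_min ht hτpos
    have hne : Filter.NeBot (nhdsWithin 0 (Ioo 0 c)) := by
      rw [← mem_closure_iff_nhdsWithin_neBot, closure_Ioo hc0.ne]
      exact ⟨le_rfl, hc0.le⟩
    have htend : Filter.Tendsto (fun ε => y ε + 2 * b) (nhdsWithin 0 (Ioo 0 c))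
        (nhds (y 0 + 2 * b)) := by
      have h0S : (0 : ℝ) ∈ {u : ℝ | 0 ≤ u ∧ ENNReal.ofReal u < T} := ⟨le_rfl, by simpa using hT⟩
      have hsub : Ioo 0 c ⊆ {u : ℝ | 0 ≤ u ∧ ENNReal.ofReal u < T} := by
        intro x hx
        exact ⟨hx.1.le, hmono (hx.2.le.trans (min_le_left _ _)) htT⟩
      have hcw : ContinuousWithinAt y (Ioo 0 c) 0 := (hy_cont 0 h0S).mono hsub
      exact hcw.tendsto.add tendsto_const_nhds
    refine ge_of_tendsto htend ?_
    refine eventually_nhdsWithin_of_forall ?_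
    intro ε hε
    have hεt : ε < t := lt_of_lt_of_le hε.2 (min_le_left _ _)
    have hετ : ε < τ := lt_of_lt_of_le hε.2 (min_le_right _ _)
    have hint := hint2b ε t hε.1 hετ hεt ht2τ htT
    have hL := L1 ε t hε.1 hεt.le htT
    have hyε : 0 ≤ y ε := hy_nonneg ε hε.1.le (hmono hεt.le htT)
    have hexp : Real.exp (a * ε) ≤ Real.exp (a * t) :=
      Real.exp_le_exp.mpr (by nlinarith [hεt.le])
    have hexpt : 0 < Real.exp (a * t) := Real.exp_pos _
    have : Real.exp (a * t) * y t ≤ Real.exp (a * t) * (y ε + 2 * b) := by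
      nlinarith
    exact le_of_mul_le_mul_left this hexpt
  -- main induction
  set B := y 0 + 2 * b + b / a with hB
  have hBge : 2 * b + b / a ≤ B := by
    rw [hB]; linarith
  have hba : 0 < b / a := div_pos hb ha
  have key : ∀ n : ℕ, ∀ t : ℝ, 0 < t → t ≤ 2 + n → ENNReal.ofReal t < T → y t ≤ B := by
    intro n
    induction n with
    | zero =>
      intro t ht ht2 htT
      have := hcase1 t ht (hcase_small t (by simpa using ht2) htT) htT
      rw [hB]
      linarith
    | succ n ih =>
      intro t ht ht2 htT
      rcases le_or_gt t (2 + n) with hcase | hcase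
      · exact ih t ht hcase htT
      · have ht2' : 2 < t := lt_of_le_of_lt (by norm_num) hcase
        have h2τt : 2 * τ < t := by linarith
        have hτ1 : τ = 1 := hτeq1 t ht htT h2τt
        have ht1 : 0 < t - 1 := by linarith
        have hyt1 : y (t - 1) ≤ B := by
          refine ih (t - 1) ht1 ?_ (hmono (by linarith) htT)
          push_cast at ht2 ⊢
          linarith
        have hfb : ∫ σ in (t - 1)..t, f σ ≤ b := by
          have := hbound (t - 1) ht1 (by rw [hτ1, sub_add_cancel]; exact htT)
          rwa [hτ1, sub_add_cancel] at this
        have hL := L1 (t - 1) t ht1 (by linarith) htT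
        have hyt1' : 0 ≤ y (t - 1) := hy_nonneg (t - 1) ht1.le (hmono (by linarith) htT)
        -- arithmetic: exp(a(t-1)) B + exp(at) b ≤ exp(at) B
        have hexpfac : Real.exp (a * (t - 1)) = Real.exp (a * t) * Real.exp (-a) := by
          rw [← Real.exp_add]; ring_nf
        have hea : Real.exp (-a) * (1 + a) ≤ 1 := by
          have h1 : 1 + a ≤ Real.exp a := by linarith [Real.add_one_le_exp a]
          have h2 : 0 < Real.exp (-a) := Real.exp_pos _
          have h3 : Real.exp (-a) * Real.exp a = 1 := by
            rw [← Real.exp_add]; simp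
          nlinarith
        have hBpos : 0 < B := by rw [hB]; positivity
        have hkey : b ≤ (1 - Real.exp (-a)) * B := by
          have hea2 : Real.exp (-a) ≤ 1 / (1 + a) := by
            have h2 : (0:ℝ) < 1 + a := by linarith
            rw [le_div_iff₀ h2]
            linarith [hea]
          have h2 : (0:ℝ) < 1 + a := by linarith
          have h3 : a / (1 + a) ≤ 1 - Real.exp (-a) := by
            have : 1 - 1 / (1 + a) = a / (1 + a) := by field_simp; ring
            linarith
          have h4 : b ≤ a / (1 + a) * (2 * b + b / a) := by
            rw [div_mul_eq_mul_div, le_div_iff₀ h2]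
            have : a * (2 * b + b / a) = 2 * a * b + b := by field_simp
            rw [this]
            nlinarith
          calc b ≤ a / (1 + a) * (2 * b + b / a) := h4
          _ ≤ a / (1 + a) * B := by
            apply mul_le_mul_of_nonneg_left hBge (by positivity)
          _ ≤ (1 - Real.exp (-a)) * B := mul_le_mul_of_nonneg_right h3 hBpos.le
        have hexpt : 0 < Real.exp (a * t) := Real.exp_pos _
        have hfinal : Real.exp (a * t) * y t ≤ Real.exp (a * t) * B := by
          rw [hexpfac] at hL
          have hea0 : 0 < Real.exp (-a) := Real.exp_pos _
          nlinarith [mul_le_mul_of_nonneg_left hkey hexpt.le,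
            mul_le_mul_of_nonneg_left hyt1 (mul_pos hexpt hea0).le]
        exact le_of_mul_le_mul_left hfinal hexpt
  intro t ht htT
  exact key ⌈t⌉₊ t ht (by have := Nat.le_ceil t; linarith) htT
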